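/- Let ω > 0 and q > p > 1 be real numbers, and let f(u) = -ω u + u^p - u^q for u > 0. Then f(u) < 0 for every u > 0 if and only if ω > η_{p,q}, where η_{p,q} = ((q-p)/(q-1)) · ((p-1)/(q-1))^{(p-1)/(q-p)}. -/

import Mathlib

open Real

lemma key_ineq {a b : ℝ} (ha : 0 < a) (hab : a < b) {u : ℝ} (hu : 0 < u) :
    u ^ a - u ^ b ≤ (b - a) / b * ((a / b) ^ (a / (b - a))) := by
  have hb : 0 < b := ha.trans hab
  have hc : 0 < b - a := by linarith
  have hθ : (0:ℝ) < a / b := div_pos ha hb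
  set lam : ℝ := (a / b) ^ (b / (b - a)) with hlamdef
  have hlam : 0 < lam := rpow_pos_of_pos hθ _
  have hw : (1 - a / b) + a / b = 1 := by ring
  have h := Real.geom_mean_le_arith_mean2_weighted (w₁ := 1 - a / b) (w₂ := a / b)
    (p₁ := lam) (p₂ := u ^ b) (by nlinarith [(div_lt_one hb).2 hab]) hθ.le hlam.le
    (rpow_nonneg hu.le b) hw
  have e1 : lam ^ (1 - a / b) = a / b := by
    rw [hlamdef, ← Real.rpow_mul hθ.le]
    have : b / (b - a) * (1 - a / b) = 1 := by field_simp
    rw [this, rpow_one]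
  have e2 : (u ^ b) ^ (a / b) = u ^ a := by
    rw [← Real.rpow_mul hu.le]
    congr 1
    field_simp
  rw [e1, e2] at h
  have hlam2 : lam = (a / b) ^ (a / (b - a)) * (a / b) := by
    rw [hlamdef]
    have : b / (b - a) = a / (b - a) + 1 := by field_simp; ring
    rw [this, rpow_add hθ, rpow_one]
  have hgoal : a / b * (u ^ a - u ^ b) ≤ (1 - a / b) * lam := by linarith
  rw [hlam2] at hgoal
  have h2 : u ^ a - u ^ b ≤ ((1 - a / b) * ((a / b) ^ (a / (b - a)) * (a / b))) / (a / b) := by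
    rw [le_div_iff₀ hθ]
    linarith [hgoal]
  calc u ^ a - u ^ b ≤ ((1 - a / b) * ((a / b) ^ (a / (b - a)) * (a / b))) / (a / b) := h2
    _ = (b - a) / b * ((a / b) ^ (a / (b - a))) := by field_simp

lemma key_eq {a b : ℝ} (ha : 0 < a) (hab : a < b) :
    ((a / b) ^ ((b - a)⁻¹)) ^ a - ((a / b) ^ ((b - a)⁻¹)) ^ b
      = (b - a) / b * ((a / b) ^ (a / (b - a))) := by
  have hb : 0 < b := ha.trans hab
  have hc : 0 < b - a := by linarith
  have hθ : (0:ℝ) < a / b := div_pos ha hb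
  rw [← Real.rpow_mul hθ.le, ← Real.rpow_mul hθ.le]
  have ea : (b - a)⁻¹ * a = a / (b - a) := by ring
  have eb : (b - a)⁻¹ * b = a / (b - a) + 1 := by field_simp; ring
  rw [ea, eb, rpow_add hθ, rpow_one]
  field_simp

/-- For `f u = -ω u + u^p - u^q`, `f u < 0` for every `u > 0` iff
`ω > η_{p,q} = ((q-p)/(q-1)) ((p-1)/(q-1))^{(p-1)/(q-p)}`. -/
theorem stmt_15 (ω p q : ℝ) (hω : 0 < ω) (hp : 1 < p) (hpq : p < q)
    (f : ℝ → ℝ) (hf : f = fun u : ℝ => -ω * u + u ^ p - u ^ q) :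
    (∀ u : ℝ, 0 < u → f u < 0) ↔
      ω > (q - p) / (q - 1) * ((p - 1) / (q - 1)) ^ ((p - 1) / (q - p)) := by
  subst hf
  have ha : (0:ℝ) < p - 1 := by linarith
  have hab : p - 1 < q - 1 := by linarith
  have hθ : (0:ℝ) < (p - 1) / (q - 1) := div_pos ha (by linarith)
  have hs : q - 1 - (p - 1) = q - p := by ring
  have hη : ∀ u : ℝ, 0 < u → u ^ (p - 1) - u ^ (q - 1)
      ≤ (q - p) / (q - 1) * ((p - 1) / (q - 1)) ^ ((p - 1) / (q - p)) := by
    intro u hu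
    have h := key_ineq ha hab hu
    rwa [hs] at h
  have hsplit : ∀ u : ℝ, 0 < u →
      -ω * u + u ^ p - u ^ q = u * (-ω + (u ^ (p - 1) - u ^ (q - 1))) := by
    intro u hu
    have h1 : u ^ p = u * u ^ (p - 1) := by
      have h := Real.rpow_add hu 1 (p - 1)
      rw [Real.rpow_one] at h
      simpa [show (1:ℝ) + (p - 1) = p by ring] using h
    have h2 : u ^ q = u * u ^ (q - 1) := by
      have h := Real.rpow_add hu 1 (q - 1)
      rw [Real.rpow_one] at h
      simpa [show (1:ℝ) + (q - 1) = q by ring] using h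
    rw [h1, h2]; ring
  constructor
  · intro H
    set u0 : ℝ := ((p - 1) / (q - 1)) ^ ((q - p)⁻¹) with hu0def
    have hu0 : 0 < u0 := rpow_pos_of_pos hθ _
    have hH := H u0 hu0
    simp only at hH
    rw [hsplit u0 hu0] at hH
    have heq : u0 ^ (p - 1) - u0 ^ (q - 1)
        = (q - p) / (q - 1) * ((p - 1) / (q - 1)) ^ ((p - 1) / (q - p)) := by
      rw [hu0def]
      have h := key_eq ha hab
      rw [hs] at h
      exact h
    rw [heq] at hH
    by_contra hcon
    push_neg at hcon
    nlinarith [mul_pos hu0 (sub_pos.2 hω)]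
  · intro H u hu
    show -ω * u + u ^ p - u ^ q < 0
    rw [hsplit u hu]
    apply mul_neg_of_pos_of_neg hu
    have := hη u hu
    linarith
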